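/- For every real number p with 0 < p < 1/2 there exists a finite constant C(p), depending only on p, such that for every integer n ≥ C(p) and every function f : V(S_n) → ℝ one has Var_p(M_{S_n} f) ≤ (1 − 1/n) · Var_p f; since equality holds for f = δ_{a_2}, the best constant C_{S_n,p} := sup{ Var_p(M_{S_n} f)/Var_p f : Var_p f > 0 } equals 1 − 1/n for all n ≥ C(p). -/

import Mathlib

open scoped Classical

/-- The ball of radius `r` around `e` in the graph metric of `G`
(only vertices reachable from `e` are at finite distance). -/
noncomputable def gball {V : Type*} [Fintype V] (G : SimpleGraph V) (e : V) (r : ℕ) :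
    Finset V :=
  Finset.univ.filter fun m => G.Reachable e m ∧ G.dist e m ≤ r

/-- The centered Hardy–Littlewood maximal function on a finite graph. -/
noncomputable def mxHL {V : Type*} [Fintype V] (G : SimpleGraph V) (f : V → ℝ) (e : V) : ℝ :=
  ⨆ r : ℕ, (1 / ((gball G e r).card : ℝ)) * ∑ m ∈ gball G e r, |f m|

/-- The fractional centered Hardy–Littlewood maximal function on a finite graph. -/
noncomputable def mxFr {V : Type*} [Fintype V] (G : SimpleGraph V) (α : ℝ) (f : V → ℝ)
    (e : V) : ℝ :=
  ⨆ r : ℕ, ((gball G e r).card : ℝ) ^ (α - 1) * ∑ m ∈ gball G e r, |f m|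

/-- The `p`-variation of `f : V → ℝ` with respect to the graph `G`
(vertices at distance `1` are exactly the adjacent ones). -/
noncomputable def vp {V : Type*} [Fintype V] (G : SimpleGraph V) (p : ℝ) (f : V → ℝ) : ℝ :=
  ((1 / 2) * ∑ v : V, ∑ w : V, if G.Adj v w then |f v - f w| ^ p else 0) ^ (1 / p)

/-- The star graph on `Fin n`, with center the vertex with value `0`. -/
def starG (n : ℕ) : SimpleGraph (Fin n) where
  Adj v w := v ≠ w ∧ (v.val = 0 ∨ w.val = 0)
  symm := ⟨fun _ _ h => ⟨h.1.symm, h.2.symm⟩⟩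
  loopless := ⟨fun _ h => h.1 rfl⟩

/-- The `ℓ²` norm of a function on a finite vertex set. -/
noncomputable def nrm2 {V : Type*} [Fintype V] (g : V → ℝ) : ℝ :=
  Real.sqrt (∑ v : V, g v ^ 2)

open Finset


private lemma csup1 (g : ℕ → ℝ) (h : ∀ r, 1 ≤ r → g r = g 1) :
    (⨆ r, g r) = max (g 0) (g 1) := by
  have hb : ∀ r, g r ≤ max (g 0) (g 1) := by
    intro r
    rcases Nat.eq_zero_or_pos r with h0 | h1
    · subst h0; exact le_max_left _ _
    · rw [h r h1]; exact le_max_right _ _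
  refine le_antisymm (ciSup_le hb) ?_
  have hbdd : BddAbove (Set.range g) := ⟨max (g 0) (g 1), by rintro y ⟨r, rfl⟩; exact hb r⟩
  exact max_le (le_ciSup hbdd 0) (le_ciSup hbdd 1)

private lemma csup2 (g : ℕ → ℝ) (h : ∀ r, 2 ≤ r → g r = g 2) :
    (⨆ r, g r) = max (g 0) (max (g 1) (g 2)) := by
  have hb : ∀ r, g r ≤ max (g 0) (max (g 1) (g 2)) := by
    intro r
    match r with
    | 0 => exact le_max_left _ _
    | 1 => exact le_trans (le_max_left _ _) (le_max_right _ _)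
    | (m+2) =>
        rw [h (m+2) (by omega)]
        exact le_trans (le_max_right _ _) (le_max_right _ _)
  refine le_antisymm (ciSup_le hb) ?_
  have hbdd : BddAbove (Set.range g) := ⟨_, by rintro y ⟨r, rfl⟩; exact hb r⟩
  exact max_le (le_ciSup hbdd 0) (max_le (le_ciSup hbdd 1) (le_ciSup hbdd 2))

private lemma radd {p : ℝ} (hp0 : 0 ≤ p) (hp1 : p ≤ 1) {x y : ℝ} (hx : 0 ≤ x) (hy : 0 ≤ y) :
    (x + y) ^ p ≤ x ^ p + y ^ p := by
  have h := NNReal.rpow_add_le_add_rpow (⟨x, hx⟩ : NNReal) (⟨y, hy⟩ : NNReal) hp0 hp1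
  have h2 := NNReal.coe_le_coe.2 h
  exact h2

private lemma rsum_le {p : ℝ} (hp0 : 0 < p) (hp1 : p ≤ 1) {ι : Type*} (F : Finset ι)
    (s : ι → ℝ) (hs : ∀ i ∈ F, 0 ≤ s i) :
    (∑ i ∈ F, s i) ^ p ≤ ∑ i ∈ F, s i ^ p := by
  classical
  revert hs
  induction F using Finset.cons_induction with
  | empty => intro _; simp [Real.zero_rpow hp0.ne']
  | cons a F ha ih =>
    intro hs
    rw [Finset.sum_cons, Finset.sum_cons]
    have h1 : 0 ≤ s a := hs a (Finset.mem_cons_self _ _)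
    have h2 : 0 ≤ ∑ i ∈ F, s i :=
      Finset.sum_nonneg fun i hi => hs i (Finset.mem_cons_of_mem hi)
    refine le_trans (radd hp0.le hp1 h1 h2) ?_
    exact add_le_add le_rfl (ih fun i hi => hs i (Finset.mem_cons_of_mem hi))

private lemma rsum_concave {p : ℝ} (hp0 : 0 < p) (hp1 : p ≤ 1) {ι : Type*} (F : Finset ι)
    (t : ι → ℝ) (ht : ∀ i ∈ F, 0 ≤ t i) :
    ∑ i ∈ F, t i ^ p ≤ (F.card : ℝ) ^ (1 - p) * (∑ i ∈ F, t i) ^ p := by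
  rcases F.eq_empty_or_nonempty with rfl | hne
  · simp only [Finset.sum_empty, Finset.card_empty, Nat.cast_zero]
    exact mul_nonneg (Real.rpow_nonneg le_rfl _) (Real.rpow_nonneg le_rfl _)
  · have hk0 : (0:ℝ) < (F.card : ℝ) := by
      exact_mod_cast Finset.card_pos.mpr hne
    have hw : ∀ i ∈ F, (0:ℝ) ≤ ((F.card : ℝ))⁻¹ := fun i _ => by positivity
    have hw' : ∑ _i ∈ F, ((F.card : ℝ))⁻¹ = 1 := by
      rw [Finset.sum_const, nsmul_eq_mul, mul_inv_cancel₀ hk0.ne']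
    have hz : ∀ i ∈ F, (0:ℝ) ≤ t i ^ p := fun i hi => Real.rpow_nonneg (ht i hi) _
    have hq : (1:ℝ) ≤ 1/p := by
      rw [le_one_div (by norm_num) hp0]
      · linarith
    have hmean := Real.arith_mean_le_rpow_mean F (fun _ => ((F.card : ℝ))⁻¹)
      (fun i => t i ^ p) hw hw' hz hq
    have hz' : (∑ i ∈ F, ((F.card : ℝ))⁻¹ * (t i ^ p) ^ (1/p)) = ((F.card : ℝ))⁻¹ * ∑ i ∈ F, t i := by
      rw [← Finset.mul_sum]
      congr 1
      refine Finset.sum_congr rfl fun i hi => ?_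
      rw [one_div, Real.rpow_rpow_inv (ht i hi) hp0.ne']
    rw [hz', ← Finset.mul_sum, one_div_one_div] at hmean
    have hT : 0 ≤ ∑ i ∈ F, t i := Finset.sum_nonneg ht
    have hmul : (((F.card : ℝ))⁻¹ * ∑ i ∈ F, t i) ^ p
        = ((F.card : ℝ))⁻¹ ^ p * (∑ i ∈ F, t i) ^ p :=
      Real.mul_rpow (by positivity) hT
    rw [hmul] at hmean
    have := mul_le_mul_of_nonneg_left hmean hk0.le
    calc ∑ i ∈ F, t i ^ p
        = (F.card : ℝ) * (((F.card : ℝ))⁻¹ * ∑ i ∈ F, t i ^ p) := by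
          field_simp
      _ ≤ (F.card : ℝ) * (((F.card : ℝ))⁻¹ ^ p * (∑ i ∈ F, t i) ^ p) := this
      _ = (F.card : ℝ) ^ (1 - p) * (∑ i ∈ F, t i) ^ p := by
          rw [Real.rpow_sub hk0, Real.rpow_one, Real.inv_rpow hk0.le, ← mul_assoc,
            div_eq_mul_inv]

private lemma rpow_base_antitone {x y p : ℝ} (hx : 0 < x) (hxy : x ≤ y) (hp : 0 ≤ p) :
    y ^ (-p) ≤ x ^ (-p) := by
  rw [Real.rpow_neg (le_trans hx.le hxy), Real.rpow_neg hx.le]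
  have h1 : x ^ p ≤ y ^ p := Real.rpow_le_rpow hx.le hxy hp
  have h2 : 0 < x ^ p := Real.rpow_pos_of_pos hx _
  exact inv_anti₀ h2 h1





section Star
variable {n : ℕ} [NeZero n]

lemma starG_adj {v w : Fin n} : (starG n).Adj v w ↔ v ≠ w ∧ (v = 0 ∨ w = 0) := by
  show v ≠ w ∧ (v.val = 0 ∨ w.val = 0) ↔ _
  constructor
  · rintro ⟨h1, h2 | h2⟩
    · exact ⟨h1, Or.inl (by rwa [Fin.ext_iff, Fin.val_zero])⟩
    · exact ⟨h1, Or.inr (by rwa [Fin.ext_iff, Fin.val_zero])⟩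
  · rintro ⟨h1, rfl | rfl⟩
    · exact ⟨h1, Or.inl (Fin.val_zero n)⟩
    · exact ⟨h1, Or.inr (Fin.val_zero n)⟩

lemma star_reachable (e m : Fin n) : (starG n).Reachable e m := by
  have h0 : ∀ v : Fin n, (starG n).Reachable v 0 := by
    intro v
    by_cases hv : v = 0
    · subst hv; exact SimpleGraph.Reachable.refl _
    · exact (starG_adj.mpr ⟨hv, Or.inr rfl⟩).reachable
  exact (h0 e).trans (h0 m).symm

lemma star_dist_le_two (e m : Fin n) : (starG n).dist e m ≤ 2 := by
  by_cases hem : e = m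
  · subst hem; simp [SimpleGraph.dist_self]
  by_cases he : e = 0
  · subst he
    have : (starG n).dist 0 m = 1 :=
      SimpleGraph.dist_eq_one_iff_adj.mpr (starG_adj.mpr ⟨hem, Or.inl rfl⟩)
    omega
  by_cases hm : m = 0
  · subst hm
    have : (starG n).dist e 0 = 1 :=
      SimpleGraph.dist_eq_one_iff_adj.mpr (starG_adj.mpr ⟨hem, Or.inr rfl⟩)
    omega
  · let w : (starG n).Walk e m :=
      SimpleGraph.Walk.cons (starG_adj.mpr ⟨he, Or.inr rfl⟩)
        (SimpleGraph.Walk.cons (starG_adj.mpr ⟨fun h => hm h.symm, Or.inl rfl⟩)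
          SimpleGraph.Walk.nil)
    have hw := SimpleGraph.dist_le w
    simpa [w] using hw

lemma gball_zero {V : Type*} [Fintype V] (G : SimpleGraph V) (e : V) :
    gball G e 0 = {e} := by
  ext m
  simp only [gball, Finset.mem_filter, Finset.mem_univ, true_and, Finset.mem_singleton,
    Nat.le_zero]
  constructor
  · rintro ⟨hre, hd⟩
    exact (hre.dist_eq_zero_iff.mp hd).symm
  · rintro rfl
    exact ⟨SimpleGraph.Reachable.refl _, SimpleGraph.dist_self⟩

lemma gball_star_two (e : Fin n) {r : ℕ} (hr : 2 ≤ r) :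
    gball (starG n) e r = Finset.univ := by
  ext m
  simp only [gball, Finset.mem_filter, Finset.mem_univ, true_and, iff_true]
  exact ⟨star_reachable e m, le_trans (star_dist_le_two e m) hr⟩

lemma gball_center {r : ℕ} (hr : 1 ≤ r) :
    gball (starG n) (0 : Fin n) r = Finset.univ := by
  ext m
  simp only [gball, Finset.mem_filter, Finset.mem_univ, true_and, iff_true]
  refine ⟨star_reachable _ m, ?_⟩
  by_cases hm : m = 0
  · subst hm; simp [SimpleGraph.dist_self]
  · have : (starG n).dist 0 m = 1 :=
      SimpleGraph.dist_eq_one_iff_adj.mpr (starG_adj.mpr ⟨fun h => hm h.symm, Or.inl rfl⟩)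
    omega

lemma gball_leaf {e : Fin n} (he : e ≠ 0) :
    gball (starG n) e 1 = {e, 0} := by
  ext m
  simp only [gball, Finset.mem_filter, Finset.mem_univ, true_and, Finset.mem_insert,
    Finset.mem_singleton]
  constructor
  · rintro ⟨hre, hd⟩
    rcases Nat.le_one_iff_eq_zero_or_eq_one.mp hd with h0 | h1
    · exact Or.inl (hre.dist_eq_zero_iff.mp h0).symm
    · have hadj := SimpleGraph.dist_eq_one_iff_adj.mp h1
      rcases (starG_adj.mp hadj) with ⟨hne, h | h⟩
      · exact absurd h he
      · exact Or.inr h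
  · rintro (rfl | rfl)
    · exact ⟨SimpleGraph.Reachable.refl _, by simp [SimpleGraph.dist_self]⟩
    · refine ⟨star_reachable _ _, ?_⟩
      have : (starG n).dist e 0 = 1 :=
        SimpleGraph.dist_eq_one_iff_adj.mpr (starG_adj.mpr ⟨he, Or.inr rfl⟩)
      omega

end Star

section MaxFormulas
variable {n : ℕ} [NeZero n]

lemma mxHL_center (f : Fin n → ℝ) :
    mxHL (starG n) f 0 = max |f 0| ((∑ v, |f v|) / n) := by
  unfold mxHL
  rw [csup1 _ (fun r hr => by rw [gball_center hr, gball_center (le_refl 1)])]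
  congr 1
  · rw [gball_zero]
    simp
  · rw [gball_center (le_refl 1)]
    rw [Finset.card_univ, Fintype.card_fin, one_div_mul_eq_div]

lemma mxHL_leaf (f : Fin n → ℝ) {e : Fin n} (he : e ≠ 0) :
    mxHL (starG n) f e
      = max |f e| (max ((|f e| + |f 0|) / 2) ((∑ v, |f v|) / n)) := by
  unfold mxHL
  rw [csup2 _ (fun r hr => by rw [gball_star_two e hr, gball_star_two e (le_refl 2)])]
  congr 1
  · rw [gball_zero]; simp
  congr 1
  · rw [gball_leaf he, Finset.card_pair he, Finset.sum_pair he]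
    ring
  · rw [gball_star_two e (le_refl 2)]
    rw [Finset.card_univ, Fintype.card_fin, one_div_mul_eq_div]

end MaxFormulas


lemma vp_star {n : ℕ} [NeZero n] (p : ℝ) (f : Fin n → ℝ) :
    vp (starG n) p f = (∑ w ∈ Finset.univ.erase 0, |f 0 - f w| ^ p) ^ (1 / p) := by
  unfold vp
  congr 1
  rw [← Finset.add_sum_erase _ _ (Finset.mem_univ (0 : Fin n))]
  have hF0 : (∑ w : Fin n, if (starG n).Adj 0 w then |f 0 - f w| ^ p else 0)
      = ∑ w ∈ Finset.univ.erase 0, |f 0 - f w| ^ p := by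
    rw [Finset.sum_congr rfl (fun w _ => show (if (starG n).Adj 0 w then |f 0 - f w| ^ p else 0)
        = if w ∈ Finset.univ.erase 0 then |f 0 - f w| ^ p else 0 from by
      by_cases hw : w = 0
      · subst hw
        rw [if_neg (by simp [starG_adj]), if_neg (by simp)]
      · rw [if_pos (starG_adj.mpr ⟨fun h => hw h.symm, Or.inl rfl⟩),
          if_pos (Finset.mem_erase.mpr ⟨hw, Finset.mem_univ _⟩)])]
    rw [Finset.sum_ite_mem, Finset.univ_inter]
  have hFv : ∀ v ∈ Finset.univ.erase (0 : Fin n),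
      (∑ w : Fin n, if (starG n).Adj v w then |f v - f w| ^ p else 0) = |f 0 - f v| ^ p := by
    intro v hv
    obtain ⟨hv0, -⟩ := Finset.mem_erase.mp hv
    have : (∑ w : Fin n, if (starG n).Adj v w then |f v - f w| ^ p else 0)
        = ∑ w : Fin n, if w = 0 then |f v - f w| ^ p else 0 := by
      refine Finset.sum_congr rfl fun w _ => ?_
      by_cases hw : w = 0
      · subst hw
        rw [if_pos (starG_adj.mpr ⟨hv0, Or.inr rfl⟩), if_pos rfl]
      · rw [if_neg, if_neg hw]
        intro hadj
        rcases starG_adj.mp hadj with ⟨-, h | h⟩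
        · exact hv0 h
        · exact hw h
    rw [this, Finset.sum_ite_eq' Finset.univ (0 : Fin n) (fun w => |f v - f w| ^ p),
      if_pos (Finset.mem_univ _), abs_sub_comm]
  rw [hF0, Finset.sum_congr rfl hFv]
  ring
set_option maxHeartbeats 1000000 in
private lemma core {p : ℝ} (hp0 : 0 < p) (hp1 : p ≤ 1) {n : ℕ} [NeZero n] (hn3 : 3 ≤ n)
    (hcond : (n : ℝ) ^ (-p) + 2 ^ (-p) ≤ (1 - 1/(n:ℝ)) ^ p)
    (a : ℝ) (ha : 0 ≤ a) (x : Fin n → ℝ) (hx : ∀ i, 0 ≤ x i)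
    (A : ℝ) (hA : A = (a + ∑ w ∈ Finset.univ.erase 0, x w) / n) :
    ∑ w ∈ Finset.univ.erase 0, |max a A - max (x w) (max ((x w + a)/2) A)| ^ p
      ≤ (1 - 1/(n:ℝ)) ^ p * ∑ w ∈ Finset.univ.erase 0, |a - x w| ^ p := by
  classical
  set I := Finset.univ.erase (0 : Fin n) with hIdef
  have hn0 : (0:ℝ) < n := by exact_mod_cast (by omega : 0 < n)
  have hcard : (I.card : ℝ) = (n : ℝ) - 1 := by
    rw [hIdef, Finset.card_erase_of_mem (Finset.mem_univ _), Finset.card_univ, Fintype.card_fin]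
    rw [Nat.cast_sub (by omega)]
    norm_num
  set c : ℝ := 1 - 1/(n:ℝ) with hc
  have hinv3 : 1/(n:ℝ) ≤ 1/3 := by
    apply one_div_le_one_div_of_le
    · norm_num
    · exact_mod_cast hn3
  have hinvpos : 0 < 1/(n:ℝ) := by positivity
  have hc0 : 0 < c := by rw [hc]; linarith
  have hc1 : c ≤ 1 := by rw [hc]; linarith
  have hcple : c ≤ c ^ p := by
    have := Real.rpow_le_rpow_of_exponent_ge hc0 hc1 hp1
    rwa [Real.rpow_one] at this
  have hcp0 : (0:ℝ) ≤ c ^ p := Real.rpow_nonneg hc0.le p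
  have hcp1 : c ^ p ≤ 1 := Real.rpow_le_one hc0.le hc1 hp0.le
  set L := I.filter (fun i => a < x i) with hLdef
  set S := I.filter (fun i => ¬ a < x i) with hSdef
  have hsplit : ∀ F : Fin n → ℝ, ∑ w ∈ I, F w = ∑ w ∈ L, F w + ∑ w ∈ S, F w := fun F =>
    (Finset.sum_filter_add_sum_filter_not I _ F).symm
  have hmemL : ∀ i ∈ L, a < x i := fun i hi => (Finset.mem_filter.mp hi).2
  have hmemS : ∀ i ∈ S, x i ≤ a := fun i hi => not_lt.mp (Finset.mem_filter.mp hi).2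
  set TL := ∑ i ∈ L, (x i - a) with hTLdef
  set TS := ∑ i ∈ S, (a - x i) with hTSdef
  have hTL0 : 0 ≤ TL := Finset.sum_nonneg fun i hi => by linarith [hmemL i hi]
  have hTS0 : 0 ≤ TS := Finset.sum_nonneg fun i hi => by linarith [hmemS i hi]
  have hbal : (n:ℝ) * A - n * a = TL - TS := by
    have h1 : (n:ℝ) * A = a + ∑ w ∈ I, x w := by rw [hA]; field_simp
    have h2 : ∑ w ∈ I, (x w - a) = TL - TS := by
      rw [hsplit (fun w => x w - a)]
      have h3 : ∑ i ∈ S, (x i - a) = -TS := by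
        rw [hTSdef, ← Finset.sum_neg_distrib]
        exact Finset.sum_congr rfl fun i _ => by ring
      rw [h3, hTLdef]
      ring
    have h4 : ∑ w ∈ I, (x w - a) = (∑ w ∈ I, x w) - ((n:ℝ) - 1) * a := by
      rw [Finset.sum_sub_distrib, Finset.sum_const, nsmul_eq_mul, hcard]
    linarith
  set U := ∑ i ∈ L, (x i - a) ^ p with hUdef
  set V := ∑ i ∈ S, (a - x i) ^ p with hVdef
  have hU0 : 0 ≤ U := Finset.sum_nonneg fun i hi => Real.rpow_nonneg (by linarith [hmemL i hi]) _
  have hV0 : 0 ≤ V := Finset.sum_nonneg fun i hi => Real.rpow_nonneg (by linarith [hmemS i hi]) _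
  have hRHS : ∑ w ∈ I, |a - x w| ^ p = U + V := by
    rw [hsplit (fun w => |a - x w| ^ p), hUdef, hVdef]
    congr 1
    · exact Finset.sum_congr rfl fun i hi => by
        rw [abs_of_nonpos (by linarith [hmemL i hi]), neg_sub]
    · exact Finset.sum_congr rfl fun i hi => by
        rw [abs_of_nonneg (by linarith [hmemS i hi])]
  have hUb : U ≤ (n:ℝ) ^ (1-p) * TL ^ p := by
    have h1 : U ≤ (L.card : ℝ) ^ (1-p) * TL ^ p :=
      rsum_concave hp0 hp1 L (fun i => x i - a)
        (fun i hi => by show (0:ℝ) ≤ x i - a; linarith [hmemL i hi])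
    refine le_trans h1 (mul_le_mul_of_nonneg_right ?_ (Real.rpow_nonneg hTL0 _))
    apply Real.rpow_le_rpow (Nat.cast_nonneg _) ?_ (by linarith)
    have : L.card ≤ n := le_trans (Finset.card_le_card (Finset.filter_subset _ _))
      (le_trans (Finset.card_le_card (Finset.erase_subset _ _)) (by simp))
    exact_mod_cast this
  have hVb : TS ^ p ≤ V :=
    rsum_le hp0 hp1 S (fun i => a - x i)
      (fun i hi => by show (0:ℝ) ≤ a - x i; linarith [hmemS i hi])
  have h1cp : 1 - c ^ p ≤ 1/(n:ℝ) := by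
    have h9 : 1 - c ^ p ≤ 1 - c := by linarith [hcple]
    calc 1 - c ^ p ≤ 1 - c := h9
      _ = 1/(n:ℝ) := by rw [hc]; ring
  have hnp : (1/(n:ℝ)) * (n:ℝ) ^ (1-p) = (n:ℝ) ^ (-p) := by
    rw [Real.rpow_sub hn0, Real.rpow_one, Real.rpow_neg hn0.le]
    field_simp
  rw [hRHS]
  by_cases hAa : A ≤ a
  -- ===================== CASE A =====================
  · have hmax0 : max a A = a := max_eq_left hAa
    have hLpart : ∑ i ∈ L, |max a A - max (x i) (max ((x i + a)/2) A)| ^ p = U := by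
      rw [hUdef]
      refine Finset.sum_congr rfl fun i hi => ?_
      have hxi := hmemL i hi
      have h1 : max (x i) (max ((x i + a)/2) A) = x i :=
        max_eq_left (max_le (by linarith) (by linarith))
      rw [hmax0, h1, abs_of_nonpos (by linarith), neg_sub]
    have hSpart : ∑ i ∈ S, |max a A - max (x i) (max ((x i + a)/2) A)| ^ p
        ≤ 2 ^ (-p) * V := by
      rw [hVdef, Finset.mul_sum]
      refine Finset.sum_le_sum fun i hi => ?_
      have hxi := hmemS i hi
      have hmge : (x i + a)/2 ≤ max ((x i + a)/2) A := le_max_left _ _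
      have hmle : max ((x i + a)/2) A ≤ a := max_le (by linarith) hAa
      have h1 : max (x i) (max ((x i + a)/2) A) = max ((x i + a)/2) A :=
        max_eq_right (le_trans (by linarith) hmge)
      rw [hmax0, h1, abs_of_nonneg (by linarith)]
      have h2 : a - max ((x i + a)/2) A ≤ (a - x i)/2 := by linarith
      calc (a - max ((x i + a)/2) A) ^ p ≤ ((a - x i)/2) ^ p :=
            Real.rpow_le_rpow (by linarith) h2 hp0.le
        _ = 2 ^ (-p) * (a - x i) ^ p := by
            rw [div_eq_mul_inv, Real.mul_rpow (by linarith) (by norm_num),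
              Real.inv_rpow (by norm_num), ← Real.rpow_neg (by norm_num)]
            ring
    have hLS : ∑ w ∈ I, |max a A - max (x w) (max ((x w + a)/2) A)| ^ p
        ≤ U + 2 ^ (-p) * V := by
      rw [hsplit (fun w => |max a A - max (x w) (max ((x w + a)/2) A)| ^ p)]
      exact add_le_add (le_of_eq hLpart) hSpart
    have hkey : (1 - c ^ p) * U ≤ (c ^ p - 2 ^ (-p)) * V := by
      have hTLTS : TL ≤ TS := by nlinarith [hbal, mul_le_mul_of_nonneg_left hAa hn0.le]
      have k2 : TL ^ p ≤ TS ^ p := Real.rpow_le_rpow hTL0 hTLTS hp0.le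
      have k4 : (n:ℝ) ^ (-p) ≤ c ^ p - 2 ^ (-p) := by linarith [hcond]
      have hnpge : (0:ℝ) ≤ (n:ℝ) ^ (-p) := Real.rpow_nonneg hn0.le _
      calc (1 - c ^ p) * U ≤ (1/(n:ℝ)) * ((n:ℝ) ^ (1-p) * TL ^ p) := by
            apply mul_le_mul h1cp hUb hU0 (by positivity)
        _ = (n:ℝ) ^ (-p) * TL ^ p := by rw [← mul_assoc, hnp]
        _ ≤ (n:ℝ) ^ (-p) * TS ^ p := mul_le_mul_of_nonneg_left k2 hnpge
        _ ≤ (n:ℝ) ^ (-p) * V := mul_le_mul_of_nonneg_left hVb hnpge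
        _ ≤ (c ^ p - 2 ^ (-p)) * V := mul_le_mul_of_nonneg_right k4 hV0
    linarith [hLS, hkey]
  -- ===================== CASE B =====================
  · push_neg at hAa
    have hmax0 : max a A = A := max_eq_right hAa.le
    have hAval : A = a + (TL - TS)/(n:ℝ) := by
      have h10 : A - a = (TL - TS)/(n:ℝ) := by
        rw [eq_div_iff hn0.ne']
        linear_combination hbal
      linarith [h10]
    have hSpart : ∑ i ∈ S, |max a A - max (x i) (max ((x i + a)/2) A)| ^ p = 0 := by
      refine Finset.sum_eq_zero fun i hi => ?_
      have hxi := hmemS i hi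
      have h1 : max ((x i + a)/2) A = A := max_eq_right (by linarith)
      rw [hmax0, h1, max_eq_right (by linarith : x i ≤ A), sub_self, abs_zero,
        Real.zero_rpow hp0.ne']
    have hLterm : ∀ i ∈ L, |max a A - max (x i) (max ((x i + a)/2) A)| ^ p
        = (max (x i) A - A) ^ p := by
      intro i hi
      have hxi := hmemL i hi
      have h1 : max (x i) (max ((x i + a)/2) A) = max (x i) A := by
        have hmidxi : (x i + a)/2 ≤ x i := by linarith
        rcases le_total ((x i + a)/2) A with h | h
        · rw [max_eq_right h]
        · rw [max_eq_left h, max_eq_left hmidxi, max_eq_left (le_trans h hmidxi)]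
      rw [hmax0, h1, abs_of_nonpos (sub_nonpos.mpr (le_max_right _ _)), neg_sub]
    have hsum_eq : ∑ w ∈ I, |max a A - max (x w) (max ((x w + a)/2) A)| ^ p
        = ∑ i ∈ L, (max (x i) A - A) ^ p := by
      rw [hsplit (fun w => |max a A - max (x w) (max ((x w + a)/2) A)| ^ p), hSpart,
        add_zero]
      exact Finset.sum_congr rfl hLterm
    rw [hsum_eq]
    have hterm0 : ∀ i : Fin n, (0:ℝ) ≤ max (x i) A - A := fun i =>
      sub_nonneg.mpr (le_max_right _ _)
    have hca : ∀ i : Fin n, c * (x i - a) = (x i - a) - (x i - a)/(n:ℝ) := by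
      intro i
      rw [hc]
      ring
    have hgoodbound : ∀ i ∈ L, x i - a ≤ TL - TS →
        (max (x i) A - A) ^ p ≤ c ^ p * (x i - a) ^ p := by
      intro i hi hgood
      have hxi := hmemL i hi
      have hle : max (x i) A - A ≤ c * (x i - a) := by
        rcases le_total (x i) A with h | h
        · rw [max_eq_right h]
          have : 0 ≤ c * (x i - a) := mul_nonneg hc0.le (by linarith)
          linarith
        · rw [max_eq_left h]
          have h5 : (x i - a)/(n:ℝ) ≤ (TL - TS)/(n:ℝ) := by gcongr
          rw [hca i]
          have h6 : A - a = (TL - TS)/(n:ℝ) := by rw [hAval]; ring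
          linarith
      calc (max (x i) A - A) ^ p ≤ (c * (x i - a)) ^ p :=
            Real.rpow_le_rpow (hterm0 i) hle hp0.le
        _ = c ^ p * (x i - a) ^ p := Real.mul_rpow hc0.le (by linarith)
    set K := (TS/(n:ℝ)) ^ p with hKdef
    have hK0 : 0 ≤ K := Real.rpow_nonneg (by positivity) _
    have hKle : K ≤ c ^ p * V := by
      have h1 : TS/(n:ℝ) = TS * ((n:ℝ))⁻¹ := by ring
      have h2 : K = TS ^ p * (((n:ℝ))⁻¹) ^ p := by
        rw [hKdef, h1, Real.mul_rpow hTS0 (by positivity)]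
      have h3 : (((n:ℝ))⁻¹) ^ p ≤ c ^ p := by
        apply Real.rpow_le_rpow (by positivity) ?_ hp0.le
        rw [hc]
        have : ((n:ℝ))⁻¹ = 1/(n:ℝ) := by ring
        linarith
      calc K = TS ^ p * (((n:ℝ))⁻¹) ^ p := h2
        _ ≤ TS ^ p * c ^ p := mul_le_mul_of_nonneg_left h3 (Real.rpow_nonneg hTS0 _)
        _ ≤ V * c ^ p := mul_le_mul_of_nonneg_right hVb hcp0
        _ = c ^ p * V := mul_comm _ _
    have hgoal : ∀ X, X ≤ c ^ p * U + c ^ p * V → X ≤ c ^ p * (U + V) := by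
      intro X hX
      rw [mul_add]
      exact hX
    by_cases hB1 : 2*TS ≤ TL
    -- ---- subcase B1 ----
    · set Bs := L.filter (fun i => TL - TS < x i - a) with hBsdef
      have hBcard : Bs.card ≤ 1 := by
        rw [Finset.card_le_one]
        intro i hi j hj
        by_contra hij
        obtain ⟨hiL, hibad⟩ := Finset.mem_filter.mp hi
        obtain ⟨hjL, hjbad⟩ := Finset.mem_filter.mp hj
        have hpair : (x i - a) + (x j - a) ≤ TL := by
          have hsub : ({i, j} : Finset (Fin n)) ⊆ L := by
            intro k hk
            rcases Finset.mem_insert.mp hk with rfl | hk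
            · exact hiL
            · rw [Finset.mem_singleton] at hk; subst hk; exact hjL
          calc (x i - a) + (x j - a) = ∑ k ∈ ({i,j} : Finset (Fin n)), (x k - a) :=
                (Finset.sum_pair (f := fun k => x k - a) hij).symm
            _ ≤ TL := Finset.sum_le_sum_of_subset_of_nonneg hsub
                (fun k hk _ => by linarith [hmemL k hk])
        linarith
      have hbadbound : ∀ i ∈ Bs, (max (x i) A - A) ^ p ≤ c ^ p * (x i - a) ^ p + K := by
        intro i hi
        obtain ⟨hiL, -⟩ := Finset.mem_filter.mp hi
        have hxi := hmemL i hiL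
        rcases le_total (x i) A with h | h
        · rw [max_eq_right h, sub_self, Real.zero_rpow hp0.ne']
          have : 0 ≤ c ^ p * (x i - a) ^ p :=
            mul_nonneg hcp0 (Real.rpow_nonneg (by linarith) _)
          linarith
        · rw [max_eq_left h]
          have e1 : x i - a ≤ TL := by
            have := Finset.single_le_sum (f := fun j => x j - a)
              (fun j hj => by show (0:ℝ) ≤ x j - a; linarith [hmemL j hj]) hiL
            exact this
          have hkey2 : c * (x i - a) + TS/(n:ℝ) - (x i - A) = (TL - (x i - a))/(n:ℝ) := by
            rw [hAval, hc]
            ring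
          have hnn : 0 ≤ (TL - (x i - a))/(n:ℝ) := div_nonneg (by linarith) hn0.le
          have h6 : x i - A ≤ c * (x i - a) + TS/(n:ℝ) := by linarith
          calc (x i - A) ^ p ≤ (c * (x i - a) + TS/(n:ℝ)) ^ p :=
                Real.rpow_le_rpow (by linarith : (0:ℝ) ≤ x i - A) h6 hp0.le
            _ ≤ (c * (x i - a)) ^ p + (TS/(n:ℝ)) ^ p :=
                radd hp0.le hp1 (mul_nonneg hc0.le (by linarith)) (by positivity)
            _ = c ^ p * (x i - a) ^ p + K := by
                rw [Real.mul_rpow hc0.le (by linarith), hKdef]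
      have hLsum : ∑ i ∈ L, (max (x i) A - A) ^ p ≤ c ^ p * U + K := by
        have hsplit2 : ∑ i ∈ L, (max (x i) A - A) ^ p
            = ∑ i ∈ Bs, (max (x i) A - A) ^ p
              + ∑ i ∈ L.filter (fun i => ¬ TL - TS < x i - a), (max (x i) A - A) ^ p :=
          (Finset.sum_filter_add_sum_filter_not L _ _).symm
        have hU2 : c ^ p * U = ∑ i ∈ Bs, c ^ p * (x i - a) ^ p
            + ∑ i ∈ L.filter (fun i => ¬ TL - TS < x i - a), c ^ p * (x i - a) ^ p := by
          rw [hUdef, Finset.mul_sum, hBsdef]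
          exact (Finset.sum_filter_add_sum_filter_not L _ _).symm
        have hb1 : ∑ i ∈ Bs, (max (x i) A - A) ^ p
            ≤ ∑ i ∈ Bs, c ^ p * (x i - a) ^ p + K := by
          calc ∑ i ∈ Bs, (max (x i) A - A) ^ p
              ≤ ∑ i ∈ Bs, (c ^ p * (x i - a) ^ p + K) := Finset.sum_le_sum hbadbound
            _ = ∑ i ∈ Bs, c ^ p * (x i - a) ^ p + Bs.card • K := by
                rw [Finset.sum_add_distrib, Finset.sum_const]
            _ ≤ ∑ i ∈ Bs, c ^ p * (x i - a) ^ p + K := by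
                have : (Bs.card : ℝ) * K ≤ 1 * K := by
                  apply mul_le_mul_of_nonneg_right ?_ hK0
                  exact_mod_cast hBcard
                rw [nsmul_eq_mul]
                linarith
        have hb2 : ∑ i ∈ L.filter (fun i => ¬ TL - TS < x i - a), (max (x i) A - A) ^ p
            ≤ ∑ i ∈ L.filter (fun i => ¬ TL - TS < x i - a), c ^ p * (x i - a) ^ p := by
          refine Finset.sum_le_sum fun i hi => ?_
          obtain ⟨hiL, hig⟩ := Finset.mem_filter.mp hi
          exact hgoodbound i hiL (not_lt.mp hig)
        rw [hsplit2, hU2]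
        linarith
      exact hgoal _ (by linarith [hLsum, hKle])
    -- ---- subcase B2 ----
    · push_neg at hB1
      have hLsum : ∑ i ∈ L, (max (x i) A - A) ^ p ≤ U := by
        rw [hUdef]
        refine Finset.sum_le_sum fun i hi => ?_
        have hxi := hmemL i hi
        have hle : max (x i) A - A ≤ x i - a := by
          rcases le_total (x i) A with h | h
          · rw [max_eq_right h]; linarith
          · rw [max_eq_left h]; linarith
        exact Real.rpow_le_rpow (hterm0 i) hle hp0.le
      have hfinal : (1 - c ^ p) * U ≤ c ^ p * V := by
        have k2 : TL ^ p ≤ (2*TS) ^ p := Real.rpow_le_rpow hTL0 (by linarith) hp0.le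
        have k3 : (2*TS) ^ p = 2 ^ p * TS ^ p := Real.mul_rpow (by norm_num) hTS0
        have k5 : (n:ℝ) ^ (-p) * 2 ^ p = (2/(n:ℝ)) ^ p := by
          rw [Real.rpow_neg hn0.le, div_eq_mul_inv, mul_comm (2:ℝ),
            Real.mul_rpow (by positivity) (by norm_num), Real.inv_rpow hn0.le]
        have k6 : (2/(n:ℝ)) ^ p ≤ c ^ p := by
          apply Real.rpow_le_rpow (by positivity) ?_ hp0.le
          rw [hc]
          have h7 : 2/(n:ℝ) = 2 * (1/(n:ℝ)) := by ring
          linarith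
        have hnpge : (0:ℝ) ≤ (n:ℝ) ^ (-p) := Real.rpow_nonneg hn0.le _
        calc (1 - c ^ p) * U ≤ (1/(n:ℝ)) * ((n:ℝ) ^ (1-p) * TL ^ p) := by
              apply mul_le_mul h1cp hUb hU0 (by positivity)
          _ = (n:ℝ) ^ (-p) * TL ^ p := by rw [← mul_assoc, hnp]
          _ ≤ (n:ℝ) ^ (-p) * (2 ^ p * TS ^ p) := by
              rw [← k3]; exact mul_le_mul_of_nonneg_left k2 hnpge
          _ = (2/(n:ℝ)) ^ p * TS ^ p := by rw [← mul_assoc, k5]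
          _ ≤ c ^ p * TS ^ p := mul_le_mul_of_nonneg_right k6 (Real.rpow_nonneg hTS0 _)
          _ ≤ c ^ p * V := mul_le_mul_of_nonneg_left hVb hcp0
      exact hgoal _ (by linarith [hLsum, hfinal])
private lemma part1 {p : ℝ} (hp0 : 0 < p) (hp1 : p ≤ 1) {n : ℕ} [NeZero n] (hn3 : 3 ≤ n)
    (hcond : (n : ℝ) ^ (-p) + 2 ^ (-p) ≤ (1 - 1/(n:ℝ)) ^ p) (f : Fin n → ℝ) :
    vp (starG n) p (mxHL (starG n) f) ≤ (1 - 1/(n:ℝ)) * vp (starG n) p f := by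
  have hn0 : (0:ℝ) < n := by exact_mod_cast (by omega : 0 < n)
  have hinv3 : 1/(n:ℝ) ≤ 1/3 := by
    apply one_div_le_one_div_of_le
    · norm_num
    · exact_mod_cast hn3
  have hc0 : (0:ℝ) < 1 - 1/(n:ℝ) := by linarith
  rw [vp_star, vp_star]
  set A := (∑ v, |f v|) / (n:ℝ) with hAdef
  have hSf0 : (0:ℝ) ≤ ∑ w ∈ Finset.univ.erase 0, |f 0 - f w| ^ p :=
    Finset.sum_nonneg fun w _ => Real.rpow_nonneg (abs_nonneg _) _
  have hcp0 : (0:ℝ) ≤ (1 - 1/(n:ℝ)) ^ p := Real.rpow_nonneg hc0.le _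
  have hstep : ∑ w ∈ Finset.univ.erase 0, |mxHL (starG n) f 0 - mxHL (starG n) f w| ^ p
      ≤ (1 - 1/(n:ℝ)) ^ p * ∑ w ∈ Finset.univ.erase 0, |f 0 - f w| ^ p := by
    have hcore := core hp0 hp1 hn3 hcond (|f 0|) (abs_nonneg _) (fun v => |f v|)
      (fun v => abs_nonneg _) A (by
        rw [hAdef, ← Finset.add_sum_erase _ (fun v => |f v|) (Finset.mem_univ (0 : Fin n))])
    have heq : ∑ w ∈ Finset.univ.erase 0, |mxHL (starG n) f 0 - mxHL (starG n) f w| ^ p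
        = ∑ w ∈ Finset.univ.erase 0,
            |max |f 0| A - max |f w| (max ((|f w| + |f 0|)/2) A)| ^ p := by
      refine Finset.sum_congr rfl fun w hw => ?_
      rw [mxHL_center f, mxHL_leaf f (Finset.mem_erase.mp hw).1]
    rw [heq]
    refine le_trans hcore (mul_le_mul_of_nonneg_left ?_ hcp0)
    refine Finset.sum_le_sum fun w _ => ?_
    exact Real.rpow_le_rpow (abs_nonneg _) (abs_abs_sub_abs_le_abs_sub _ _) hp0.le
  calc (∑ w ∈ Finset.univ.erase 0, |mxHL (starG n) f 0 - mxHL (starG n) f w| ^ p) ^ (1/p)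
      ≤ ((1 - 1/(n:ℝ)) ^ p * ∑ w ∈ Finset.univ.erase 0, |f 0 - f w| ^ p) ^ (1/p) :=
        Real.rpow_le_rpow (Finset.sum_nonneg fun w _ => Real.rpow_nonneg (abs_nonneg _) _)
          hstep (by positivity)
    _ = (1 - 1/(n:ℝ)) * (∑ w ∈ Finset.univ.erase 0, |f 0 - f w| ^ p) ^ (1/p) := by
        rw [Real.mul_rpow hcp0 hSf0, ← Real.rpow_mul hc0.le, mul_one_div_cancel hp0.ne',
          Real.rpow_one]

private lemma delta_vp {p : ℝ} (hp0 : 0 < p) {n : ℕ} [NeZero n]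
    {e1 : Fin n} (he1 : e1 ≠ 0) :
    vp (starG n) p (fun v => if v = e1 then (1:ℝ) else 0) = 1 := by
  rw [vp_star]
  have h1 : ∑ w ∈ Finset.univ.erase 0,
      |(fun v : Fin n => if v = e1 then (1:ℝ) else 0) 0
        - (fun v : Fin n => if v = e1 then (1:ℝ) else 0) w| ^ p
      = ∑ w ∈ Finset.univ.erase 0, (if w = e1 then (1:ℝ) else 0) := by
    refine Finset.sum_congr rfl fun w hw => ?_
    simp only []
    rw [if_neg (fun h => he1 h.symm : ¬ (0 : Fin n) = e1)]
    by_cases hw1 : w = e1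
    · rw [if_pos hw1]
      simp
    · rw [if_neg hw1]
      simp [Real.zero_rpow hp0.ne']
  rw [h1, Finset.sum_ite_eq' (Finset.univ.erase 0) e1 (fun _ => (1:ℝ)),
    if_pos (Finset.mem_erase.mpr ⟨he1, Finset.mem_univ _⟩), Real.one_rpow]

private lemma delta_mx_vp {p : ℝ} (hp0 : 0 < p) {n : ℕ} [NeZero n] (hn3 : 3 ≤ n)
    {e1 : Fin n} (he1 : e1 ≠ 0) :
    vp (starG n) p (mxHL (starG n) (fun v => if v = e1 then (1:ℝ) else 0))
      = 1 - 1/(n:ℝ) := by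
  set g : Fin n → ℝ := fun v => if v = e1 then (1:ℝ) else 0 with hg
  have hn0 : (0:ℝ) < n := by exact_mod_cast (by omega : 0 < n)
  have hinv3 : 1/(n:ℝ) ≤ 1/3 := by
    apply one_div_le_one_div_of_le
    · norm_num
    · exact_mod_cast hn3
  have hinvpos : (0:ℝ) < 1/(n:ℝ) := by positivity
  have hc0 : (0:ℝ) < 1 - 1/(n:ℝ) := by linarith
  have hg0 : g 0 = 0 := if_neg (fun h => he1 h.symm)
  have hge1 : g e1 = 1 := if_pos rfl
  have habs : ∀ v, |g v| = g v := fun v => by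
    by_cases hv : v = e1 <;> simp [hg, hv]
  have hsum : ∑ v, |g v| = 1 := by
    rw [Finset.sum_congr rfl (fun v _ => habs v)]
    rw [hg]
    rw [Finset.sum_ite_eq' Finset.univ e1 (fun _ => (1:ℝ)), if_pos (Finset.mem_univ _)]
  have hM0 : mxHL (starG n) g 0 = 1/(n:ℝ) := by
    rw [mxHL_center g, hsum, hg0, abs_zero]
    exact max_eq_right (by positivity)
  have hMe1 : mxHL (starG n) g e1 = 1 := by
    rw [mxHL_leaf g he1, hsum, hg0, hge1, abs_zero, abs_one]
    rw [max_eq_left (max_le (by norm_num) (by rw [div_le_one hn0]; exact_mod_cast (by omega : 1 ≤ n)))]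
  have hMw : ∀ w : Fin n, w ≠ 0 → w ≠ e1 → mxHL (starG n) g w = 1/(n:ℝ) := by
    intro w hw0 hw1
    have hgw : g w = 0 := if_neg hw1
    rw [mxHL_leaf g hw0, hsum, hg0, hgw, abs_zero]
    have hz : ((0:ℝ)+0)/2 = 0 := by norm_num
    rw [hz, max_eq_right hinvpos.le, max_eq_right hinvpos.le]
  rw [vp_star]
  have h1 : ∑ w ∈ Finset.univ.erase 0,
      |mxHL (starG n) g 0 - mxHL (starG n) g w| ^ p
      = ∑ w ∈ Finset.univ.erase 0, (if w = e1 then (1 - 1/(n:ℝ)) ^ p else 0) := by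
    refine Finset.sum_congr rfl fun w hw => ?_
    obtain ⟨hw0, -⟩ := Finset.mem_erase.mp hw
    rw [hM0]
    by_cases hw1 : w = e1
    · subst hw1
      rw [hMe1, if_pos rfl, abs_of_nonpos (by linarith), neg_sub]
    · rw [hMw w hw0 hw1, if_neg hw1, sub_self, abs_zero, Real.zero_rpow hp0.ne']
  rw [h1, Finset.sum_ite_eq' (Finset.univ.erase 0) e1 (fun _ => (1 - 1/(n:ℝ)) ^ p),
    if_pos (Finset.mem_erase.mpr ⟨he1, Finset.mem_univ _⟩),
    ← Real.rpow_mul hc0.le, mul_one_div_cancel hp0.ne', Real.rpow_one]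

/-- for `0 < p < 1/2` there is a finite constant `C(p)` (here `C + 2`)
such that for every `n ≥ C(p)` the sharp constant for the `p`-variation of the
Hardy–Littlewood maximal operator on the star graph `S_n` is `1 - 1/n`. -/
theorem starGraph_var_sharp_small_p (p : ℝ) (hp0 : 0 < p) (hp1 : p < 1 / 2) :
    ∃ C : ℕ, ∀ (n : ℕ) (hn : C + 2 ≤ n),
      (∀ f : Fin n → ℝ,
          vp (starG n) p (mxHL (starG n) f) ≤ (1 - 1 / (n : ℝ)) * vp (starG n) p f) ∧
      (0 < vp (starG n) p (fun v => if v = ⟨1, by omega⟩ then (1 : ℝ) else 0) ∧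
        vp (starG n) p
            (mxHL (starG n) (fun v => if v = ⟨1, by omega⟩ then (1 : ℝ) else 0)) =
          (1 - 1 / (n : ℝ)) *
            vp (starG n) p (fun v => if v = ⟨1, by omega⟩ then (1 : ℝ) else 0)) ∧
      sSup {c : ℝ | ∃ f : Fin n → ℝ, 0 < vp (starG n) p f ∧
          c = vp (starG n) p (mxHL (starG n) f) / vp (starG n) p f} =
        1 - 1 / (n : ℝ) := by

  have hp1' : p ≤ 1 := by linarith
  have h2p1 : (2:ℝ) ^ (-p) < 1 := Real.rpow_lt_one_of_one_lt_of_neg (by norm_num) (by linarith)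
  have h2p0 : (0:ℝ) < (2:ℝ) ^ (-p) := Real.rpow_pos_of_pos (by norm_num) _
  set ε : ℝ := (1 - 2 ^ (-p))/2 with hε
  have hε0 : 0 < ε := by rw [hε]; linarith
  have hεhalf : ε < 1/2 := by rw [hε]; linarith
  set M : ℝ := max ε⁻¹ (ε ^ (-(1/p))) with hM
  refine ⟨⌈M⌉₊ + 1, ?_⟩
  intro n hn
  haveI : NeZero n := ⟨by omega⟩
  have hn3 : 3 ≤ n := by omega
  have hn0 : (0:ℝ) < n := by exact_mod_cast (by omega : 0 < n)
  have hnM : M ≤ (n:ℝ) := by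
    calc M ≤ (⌈M⌉₊ : ℝ) := Nat.le_ceil M
      _ ≤ (n:ℝ) := by exact_mod_cast (by omega : ⌈M⌉₊ ≤ n)
  have hinv : 1/(n:ℝ) ≤ ε := by
    have h1 : ε⁻¹ ≤ (n:ℝ) := le_trans (le_max_left _ _) hnM
    have h2 : (0:ℝ) < ε⁻¹ := by positivity
    have h3 := one_div_le_one_div_of_le h2 h1
    rwa [one_div ε⁻¹, inv_inv] at h3
  have hpow : (n:ℝ) ^ (-p) ≤ ε := by
    have h1 : ε ^ (-(1/p)) ≤ (n:ℝ) := le_trans (le_max_right _ _) hnM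
    have h2 : (0:ℝ) < ε ^ (-(1/p)) := Real.rpow_pos_of_pos hε0 _
    have h3 : (n:ℝ) ^ (-p) ≤ (ε ^ (-(1/p))) ^ (-p) := rpow_base_antitone h2 h1 hp0.le
    have h4 : (ε ^ (-(1/p))) ^ (-p) = ε := by
      rw [← Real.rpow_mul hε0.le,
        show (-(1/p)) * (-p) = (1/p) * p by ring, one_div, inv_mul_cancel₀ hp0.ne',
        Real.rpow_one]
    linarith
  have hc0 : (0:ℝ) < 1 - 1/(n:ℝ) := by linarith
  have hcond : (n:ℝ) ^ (-p) + 2 ^ (-p) ≤ (1 - 1/(n:ℝ)) ^ p := by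
    have hinvpos : (0:ℝ) < 1/(n:ℝ) := by positivity
    have h6 : 1 - 1/(n:ℝ) ≤ (1 - 1/(n:ℝ)) ^ p := by
      have := Real.rpow_le_rpow_of_exponent_ge hc0 (by linarith : 1 - 1/(n:ℝ) ≤ 1) hp1'
      rwa [Real.rpow_one] at this
    have h7 : (1:ℝ) - ε = 2 ^ (-p) + ε := by rw [hε]; ring
    linarith
  have he1 : (⟨1, by omega⟩ : Fin n) ≠ 0 := by
    intro h
    have h2 := congrArg Fin.val h
    rw [Fin.val_zero] at h2
    norm_num at h2
  refine ⟨part1 hp0 hp1' hn3 hcond, ⟨?_, ?_⟩, ?_⟩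
  · rw [delta_vp hp0 he1]
    norm_num
  · rw [delta_mx_vp hp0 hn3 he1, delta_vp hp0 he1, mul_one]
  · have hub : ∀ cc ∈ {c : ℝ | ∃ f : Fin n → ℝ, 0 < vp (starG n) p f ∧
        c = vp (starG n) p (mxHL (starG n) f) / vp (starG n) p f}, cc ≤ 1 - 1/(n:ℝ) := by
      rintro cc ⟨f, hf, rfl⟩
      rw [div_le_iff₀ hf]
      exact part1 hp0 hp1' hn3 hcond f
    have hmem : (1 - 1/(n:ℝ)) ∈ {c : ℝ | ∃ f : Fin n → ℝ, 0 < vp (starG n) p f ∧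
        c = vp (starG n) p (mxHL (starG n) f) / vp (starG n) p f} := by
      refine ⟨(fun v => if v = ⟨1, by omega⟩ then (1:ℝ) else 0), ?_, ?_⟩
      · rw [delta_vp hp0 he1]; norm_num
      · rw [delta_mx_vp hp0 hn3 he1, delta_vp hp0 he1, div_one]
    exact IsGreatest.csSup_eq ⟨hmem, hub⟩
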